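/- For p ∈ (0,1), n ≥ 1, and t > 0: P( KL(q̂‖p) ≥ t and q̂ ≥ p ) ≤ exp(−n·t), where q̂ is the empirical mean of n i.i.d. Bernoulli(p) random variables. -/

import Mathlib

open MeasureTheory

/-- Binary KL divergence between Bernoulli(q) and Bernoulli(p). -/
noncomputable def klBin (q p : ℝ) : ℝ :=
  q * Real.log (q / p) + (1 - q) * Real.log ((1 - q) / (1 - p))

/-- The Bernoulli(p) measure on `Bool`. -/
noncomputable def bernoulliMeasure (p : ℝ) : Measure Bool :=
  ENNReal.ofReal p • Measure.dirac true + ENNReal.ofReal (1 - p) • Measure.dirac false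

/-- Empirical mean of `n` Boolean samples. -/
noncomputable def empMean (n : ℕ) (x : Fin n → Bool) : ℝ :=
  (∑ i, if x i then (1:ℝ) else 0) / n

lemma bern_true (p : ℝ) : bernoulliMeasure p {true} = ENNReal.ofReal p := by
  simp [bernoulliMeasure]

lemma bern_false (p : ℝ) : bernoulliMeasure p {false} = ENNReal.ofReal (1-p) := by
  simp [bernoulliMeasure]

lemma bern_prob (p : ℝ) (h0 : 0 ≤ p) (h1 : p ≤ 1) :
    IsProbabilityMeasure (bernoulliMeasure p) := by
  constructor
  have : (Set.univ : Set Bool) = {true} ∪ {false} := by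
    ext b; cases b <;> simp
  rw [this, measure_union (by simp) (by simp), bern_true, bern_false,
    ← ENNReal.ofReal_add h0 (by linarith), add_sub_cancel, ENNReal.ofReal_one]

instance bern_finite (p : ℝ) : IsFiniteMeasure (bernoulliMeasure p) := by
  constructor
  have : (Set.univ : Set Bool) = {true} ∪ {false} := by ext b; cases b <;> simp
  rw [this, measure_union (by simp) (by simp), bern_true, bern_false]
  exact ENNReal.add_lt_top.2 ⟨ENNReal.ofReal_lt_top, ENNReal.ofReal_lt_top⟩

lemma pi_singleton (p : ℝ) (n : ℕ) (x : Fin n → Bool) :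
    Measure.pi (fun _ : Fin n => bernoulliMeasure p) {x}
      = ∏ i, bernoulliMeasure p {x i} := by
  rw [← Set.univ_pi_singleton x, Measure.pi_pi]

lemma prod_bern (p : ℝ) (n : ℕ) (x : Fin n → Bool) :
    (∏ i, bernoulliMeasure p {x i})
      = ENNReal.ofReal p ^ (Finset.univ.filter (fun i => x i = true)).card
        * ENNReal.ofReal (1-p) ^ (n - (Finset.univ.filter (fun i => x i = true)).card) := by
  have : ∀ i, bernoulliMeasure p {x i}
      = if x i = true then ENNReal.ofReal p else ENNReal.ofReal (1-p) := by
    intro i; cases h : x i <;> simp [h, bern_true, bern_false]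
  simp_rw [this]
  rw [Finset.prod_ite, Finset.prod_const, Finset.prod_const]
  congr 1
  have := Finset.card_filter_add_card_filter_not (s := (Finset.univ : Finset (Fin n)))
      (p := fun i => x i = true)
  simp only [Finset.card_univ, Fintype.card_fin] at this
  congr 1
  omega

/-- Core real inequality of the Chernoff bound. -/

lemma core_ineq (p a : ℝ) (hp0 : 0 < p) (hpa : p < a) (ha1 : a ≤ 1)
    (n k : ℕ) (hkn : k ≤ n) (hka : (n : ℝ) * a ≤ k) :
    p ^ k * (1 - p) ^ (n - k) ≤ Real.exp (-(n:ℝ) * klBin a p) * (a ^ k * (1 - a) ^ (n - k)) := by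
  rcases eq_or_lt_of_le ha1 with rfl | ha1
  · -- a = 1 : then k = n
    have hk : k = n := by
      have : (n : ℝ) ≤ k := by simpa using hka
      have := Nat.cast_le (α := ℝ).1 this
      omega
    subst hk
    simp only [Nat.sub_self, pow_zero, mul_one, one_pow]
    have : klBin 1 p = -Real.log p := by
      simp [klBin, Real.log_div one_ne_zero (ne_of_gt hp0)]
    rw [this]
    have : Real.exp (-(k:ℝ) * -Real.log p) = p ^ k := by
      rw [neg_mul_neg, Real.exp_nat_mul, Real.exp_log hp0]
    rw [this]
  · -- a < 1
    have hp1 : p < 1 := lt_trans hpa ha1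
    have h1p : 0 < 1 - p := by linarith
    have h1a : 0 < 1 - a := by linarith
    have ha0 : 0 < a := lt_trans hp0 hpa
    have hL : p ^ k * (1 - p) ^ (n - k)
        = Real.exp ((k : ℝ) * Real.log p + ((n:ℝ) - k) * Real.log (1 - p)) := by
      rw [Real.exp_add, mul_comm (k:ℝ), mul_comm ((n:ℝ)-k), Real.exp_mul, Real.exp_mul,
        Real.exp_log hp0, Real.exp_log h1p, ← Real.rpow_natCast, ← Real.rpow_natCast,
        Nat.cast_sub hkn]
    have hR : a ^ k * (1 - a) ^ (n - k)
        = Real.exp ((k : ℝ) * Real.log a + ((n:ℝ) - k) * Real.log (1 - a)) := by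
      rw [Real.exp_add, mul_comm (k:ℝ), mul_comm ((n:ℝ)-k), Real.exp_mul, Real.exp_mul,
        Real.exp_log ha0, Real.exp_log h1a, ← Real.rpow_natCast, ← Real.rpow_natCast,
        Nat.cast_sub hkn]
    rw [hL, hR, ← Real.exp_add, Real.exp_le_exp]
    have hkl : klBin a p = a * (Real.log a - Real.log p)
        + (1 - a) * (Real.log (1 - a) - Real.log (1 - p)) := by
      rw [klBin, Real.log_div (ne_of_gt ha0) (ne_of_gt hp0),
        Real.log_div (ne_of_gt h1a) (ne_of_gt h1p)]
    rw [hkl]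
    have hu : Real.log p ≤ Real.log a := Real.log_le_log hp0 (le_of_lt hpa)
    have hv : Real.log (1 - a) ≤ Real.log (1 - p) :=
      Real.log_le_log h1a (by linarith)
    nlinarith [mul_nonneg (sub_nonneg.2 hka) (sub_nonneg.2 hu),
      mul_nonneg (sub_nonneg.2 hka) (sub_nonneg.2 hv)]

lemma klBin_self (p : ℝ) (hp0 : 0 < p) (hp1 : p < 1) : klBin p p = 0 := by
  rw [klBin, div_self (ne_of_gt hp0), div_self (by linarith : (1:ℝ) - p ≠ 0)]
  simp

/-- Auxiliary smooth form of `klBin · p`. -/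

noncomputable def klAux (p q : ℝ) : ℝ :=
  q * Real.log q - q * Real.log p + ((1 - q) * Real.log (1 - q) - (1 - q) * Real.log (1 - p))

lemma klAux_eq (p q : ℝ) (hp0 : 0 < p) (hp1 : p < 1) (hq0 : 0 < q) :
    klAux p q = klBin q p := by
  rcases eq_or_ne q 1 with rfl | hq1
  · simp [klAux, klBin, Real.log_div one_ne_zero (ne_of_gt hp0), Real.log_one]
  · have h1q : (1:ℝ) - q ≠ 0 := by intro h; apply hq1; linarith
    rw [klAux, klBin, Real.log_div (ne_of_gt hq0) (ne_of_gt hp0),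
      Real.log_div h1q (by linarith : (1:ℝ) - p ≠ 0)]
    ring

lemma klAux_cont (p : ℝ) : Continuous (klAux p) := by
  have h1 : Continuous fun q : ℝ => q * Real.log q := Real.continuous_mul_log
  have h2 : Continuous fun q : ℝ => (1 - q) * Real.log (1 - q) :=
    Real.continuous_mul_log.comp (continuous_const.sub continuous_id)
  unfold klAux
  fun_prop

lemma klAux_strictMono (p : ℝ) (hp0 : 0 < p) (hp1 : p < 1) :
    StrictMonoOn (klAux p) (Set.Icc p 1) := by
  apply strictMonoOn_of_deriv_pos (convex_Icc p 1) (klAux_cont p).continuousOn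
  intro q hq
  rw [interior_Icc] at hq
  obtain ⟨hq1, hq2⟩ := hq
  have hq0 : 0 < q := lt_trans hp0 hq1
  have h1q : 0 < 1 - q := by linarith
  have hd : HasDerivAt (klAux p)
      ((Real.log q - Real.log p) - (Real.log (1 - q) - Real.log (1 - p))) q := by
    have d1 : HasDerivAt (fun q : ℝ => q * Real.log q) (Real.log q + 1) q :=
      Real.hasDerivAt_mul_log (ne_of_gt hq0)
    have d2 : HasDerivAt (fun q : ℝ => (1 - q) * Real.log (1 - q))
        (-(Real.log (1 - q) + 1)) q := by
      have base : HasDerivAt (fun y : ℝ => y * Real.log y) (Real.log (1 - q) + 1) (1 - q) :=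
        Real.hasDerivAt_mul_log (ne_of_gt h1q)
      have inner : HasDerivAt (fun q : ℝ => 1 - q) (-1) q := by
        simpa using (hasDerivAt_id q).const_sub 1
      simpa [Function.comp_def] using base.comp q inner
    have d3 : HasDerivAt (fun q : ℝ => q * Real.log p) (Real.log p) q := by
      simpa using (hasDerivAt_id q).mul_const (Real.log p)
    have d4 : HasDerivAt (fun q : ℝ => (1 - q) * Real.log (1 - p)) (-Real.log (1 - p)) q := by
      have inner : HasDerivAt (fun q : ℝ => 1 - q) (-1) q := by
        simpa using (hasDerivAt_id q).const_sub 1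
      simpa using inner.mul_const (Real.log (1 - p))
    have := (d1.sub d3).add (d2.sub d4)
    exact this.congr_deriv (by ring)
  rw [hd.deriv]
  have h1 : Real.log p < Real.log q := Real.log_lt_log hp0 hq1
  have h2 : Real.log (1 - q) < Real.log (1 - p) := Real.log_lt_log h1q (by linarith)
  linarith

lemma klBin_strictMono (p : ℝ) (hp0 : 0 < p) (hp1 : p < 1) :
    StrictMonoOn (fun q => klBin q p) (Set.Icc p 1) := by
  intro x hx y hy hxy
  have ex := klAux_eq p x hp0 hp1 (lt_of_lt_of_le hp0 hx.1)
  have ey := klAux_eq p y hp0 hp1 (lt_of_lt_of_le hp0 hy.1)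
  simp only [← ex, ← ey]
  exact klAux_strictMono p hp0 hp1 hx hy hxy

lemma klBin_contOn (p : ℝ) (hp0 : 0 < p) (hp1 : p < 1) :
    ContinuousOn (fun q => klBin q p) (Set.Icc p 1) := by
  apply ((klAux_cont p).continuousOn (s := Set.Icc p 1)).congr
  intro q hq
  exact (klAux_eq p q hp0 hp1 (lt_of_lt_of_le hp0 hq.1)).symm

lemma empMean_eq (n : ℕ) (x : Fin n → Bool) :
    empMean n x = ((Finset.univ.filter (fun i => x i = true)).card : ℝ) / n := by
  rw [empMean]
  congr 1
  simpa using Finset.sum_boole (fun i => x i = true) (Finset.univ : Finset (Fin n))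

lemma chernoff_aux (p a : ℝ) (hp0 : 0 < p) (hpa : p < a) (ha1 : a ≤ 1)
    (n : ℕ) (hn : 1 ≤ n) :
    Measure.pi (fun _ : Fin n => bernoulliMeasure p) {x | a ≤ empMean n x}
      ≤ ENNReal.ofReal (Real.exp (-(n:ℝ) * klBin a p)) := by
  classical
  set μ := Measure.pi (fun _ : Fin n => bernoulliMeasure p) with hμ
  set ν := Measure.pi (fun _ : Fin n => bernoulliMeasure a) with hν
  set E : Set (Fin n → Bool) := {x | a ≤ empMean n x} with hE
  set c := ENNReal.ofReal (Real.exp (-(n:ℝ) * klBin a p)) with hc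
  have ha0 : 0 < a := lt_trans hp0 hpa
  have hp1 : p < 1 := lt_of_lt_of_le hpa ha1
  have hEfin : E.Finite := Set.toFinite E
  have hcover : (↑hEfin.toFinset : Set (Fin n → Bool))
      = ⋃ x ∈ hEfin.toFinset, ({x} : Set (Fin n → Bool)) := by
    ext y; simp
  have hdisj : (↑hEfin.toFinset : Set (Fin n → Bool)).PairwiseDisjoint
      (fun x => ({x} : Set (Fin n → Bool))) := by
    intro i _ j _ hij
    simp [Function.onFun, hij]
  have hsum : ∀ (m : Measure (Fin n → Bool)),
      m E = ∑ x ∈ hEfin.toFinset, m {x} := by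
    intro m
    conv_lhs => rw [← hEfin.coe_toFinset]
    rw [hcover, measure_biUnion_finset hdisj (fun b _ => measurableSet_singleton b)]
  have hpoint : ∀ x ∈ hEfin.toFinset, μ {x} ≤ c * ν {x} := by
    intro x hx
    have hxE : a ≤ empMean n x := by
      have := hEfin.mem_toFinset.1 hx
      exact this
    set k := (Finset.univ.filter (fun i => x i = true)).card with hk
    have hkn : k ≤ n := by
      calc k ≤ (Finset.univ : Finset (Fin n)).card := Finset.card_filter_le _ _
        _ = n := by simp
    have hnpos : (0:ℝ) < n := by exact_mod_cast hn
    have hka : (n : ℝ) * a ≤ k := by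
      rw [empMean_eq, le_div_iff₀ hnpos] at hxE
      linarith
    have hμx : μ {x} = ENNReal.ofReal (p ^ k * (1 - p) ^ (n - k)) := by
      rw [hμ, pi_singleton, prod_bern,
        ENNReal.ofReal_mul (by positivity),
        ENNReal.ofReal_pow (le_of_lt hp0), ENNReal.ofReal_pow (by linarith)]
    have hνx : ν {x} = ENNReal.ofReal (a ^ k * (1 - a) ^ (n - k)) := by
      rw [hν, pi_singleton, prod_bern,
        ENNReal.ofReal_mul (by positivity),
        ENNReal.ofReal_pow (le_of_lt ha0), ENNReal.ofReal_pow (by linarith)]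
    rw [hμx, hνx, hc, ← ENNReal.ofReal_mul (Real.exp_nonneg _)]
    exact ENNReal.ofReal_le_ofReal (core_ineq p a hp0 hpa ha1 n k hkn hka)
  haveI : IsProbabilityMeasure (bernoulliMeasure a) := bern_prob a (le_of_lt ha0) ha1
  haveI : IsProbabilityMeasure ν := by
    rw [hν]; infer_instance
  calc μ E = ∑ x ∈ hEfin.toFinset, μ {x} := hsum μ
    _ ≤ ∑ x ∈ hEfin.toFinset, c * ν {x} := Finset.sum_le_sum hpoint
    _ = c * ∑ x ∈ hEfin.toFinset, ν {x} := by rw [Finset.mul_sum]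
    _ = c * ν E := by rw [hsum ν]
    _ ≤ c * 1 := mul_le_mul_right prob_le_one c
    _ = c := mul_one c

/-- Upper-tail Chernoff–Hoeffding bound in KL form: for i.i.d. Bernoulli(p)
samples, `P( KL(q̂‖p) ≥ t and q̂ ≥ p ) ≤ exp(−n t)`. -/
theorem chernoff_upper_tail_kl (p : ℝ) (hp : p ∈ Set.Ioo (0:ℝ) 1)
    (n : ℕ) (hn : 1 ≤ n) (t : ℝ) (ht : 0 < t) :
    Measure.pi (fun _ : Fin n => bernoulliMeasure p)
        {x | t ≤ klBin (empMean n x) p ∧ p ≤ empMean n x}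
      ≤ ENNReal.ofReal (Real.exp (-(n : ℝ) * t)) := by
  obtain ⟨hp0, hp1⟩ := hp
  have hnpos : (0:ℝ) < n := by exact_mod_cast hn
  have hmem : ∀ x : Fin n → Bool, empMean n x ≤ 1 := by
    intro x
    rw [empMean_eq, div_le_one hnpos]
    have : (Finset.univ.filter (fun i => x i = true)).card ≤ n := by
      calc _ ≤ (Finset.univ : Finset (Fin n)).card := Finset.card_filter_le _ _
        _ = n := by simp
    exact_mod_cast this
  by_cases hcase : t ≤ klBin 1 p
  · -- find a with klBin a p = t
    have hIVT := intermediate_value_Icc (le_of_lt hp1) (klBin_contOn p hp0 hp1)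
    have htmem : t ∈ Set.Icc (klBin p p) (klBin 1 p) := by
      rw [klBin_self p hp0 hp1]
      exact ⟨le_of_lt ht, hcase⟩
    obtain ⟨a, ha, hat0⟩ := hIVT htmem
    have hat : klBin a p = t := hat0
    have hpa : p < a := by
      rcases lt_or_eq_of_le ha.1 with h | h
      · exact h
      · exfalso; rw [← h, klBin_self p hp0 hp1] at hat; linarith
    have hsub : {x : Fin n → Bool | t ≤ klBin (empMean n x) p ∧ p ≤ empMean n x}
        ⊆ {x | a ≤ empMean n x} := by
      intro x ⟨hx1, hx2⟩
      by_contra hlt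
      simp only [Set.mem_setOf_eq, not_le] at hlt
      have := klBin_strictMono p hp0 hp1 ⟨hx2, hmem x⟩ ha hlt
      simp only at this
      rw [hat] at this
      linarith
    calc _ ≤ Measure.pi (fun _ : Fin n => bernoulliMeasure p) {x | a ≤ empMean n x} :=
          measure_mono hsub
      _ ≤ ENNReal.ofReal (Real.exp (-(n:ℝ) * klBin a p)) :=
          chernoff_aux p a hp0 hpa ha.2 n hn
      _ = ENNReal.ofReal (Real.exp (-(n:ℝ) * t)) := by rw [hat]
  · -- event is empty
    push_neg at hcase
    have : {x : Fin n → Bool | t ≤ klBin (empMean n x) p ∧ p ≤ empMean n x} = ∅ := by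
      ext x
      simp only [Set.mem_setOf_eq, Set.mem_empty_iff_false, iff_false, not_and]
      intro hx1 hx2
      have hle : klBin (empMean n x) p ≤ klBin 1 p := by
        rcases lt_or_eq_of_le (hmem x) with h | h
        · exact le_of_lt (klBin_strictMono p hp0 hp1 ⟨hx2, hmem x⟩
            ⟨le_of_lt hp1, le_refl 1⟩ h)
        · rw [h]
      linarith
    rw [this]
    simp
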